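/- Let k ≥ 1 be an integer and r ∈ (0,1) with k·r ≥ 0.29. Let (X_t)_{t≥0} and (Y_t)_{t≥1} be integer-valued random processes with X_0 = 1, X_{t+1} = X_t + Y_{t+1}, and Y_{t+1} stochastically dominating Bin(k, min{r·X_t, 1}) conditional on the history up to time t. Then for any B ∈ [1, 1/r], the hitting time T = inf{t ≥ 0 : X_t ≥ B} satisfies E[T] ≤ 4·⌈log_{1+kr}(B)⌉. -/

import Mathlib

open MeasureTheory Finset
open scoped ENNReal

noncomputable def binomTail (k : ℕ) (p : ℝ) (c : ℤ) : ℝ :=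
  ∑ j ∈ Finset.range (k + 1),
    if c ≤ (j : ℤ) then (Nat.choose k j : ℝ) * p ^ j * (1 - p) ^ (k - j) else 0

namespace Stmt4Aux

noncomputable def lowTail (k : ℕ) (p : ℝ) (d : ℤ) : ℝ :=
  ∑ j ∈ Finset.range (k + 1),
    if (j : ℤ) ≤ d then (Nat.choose k j : ℝ) * p ^ j * (1 - p) ^ (k - j) else 0

lemma sum_all (k : ℕ) (p : ℝ) :
    ∑ j ∈ Finset.range (k + 1), (Nat.choose k j : ℝ) * p ^ j * (1 - p) ^ (k - j) = 1 := by
  calc ∑ j ∈ Finset.range (k + 1), (Nat.choose k j : ℝ) * p ^ j * (1 - p) ^ (k - j)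
      = ∑ j ∈ Finset.range (k + 1), p ^ j * (1 - p) ^ (k - j) * (Nat.choose k j : ℝ) :=
        Finset.sum_congr rfl (fun j _ => by ring)
    _ = (p + (1 - p)) ^ k := (add_pow p (1 - p) k).symm
    _ = 1 := by norm_num

lemma tail_add_low (k : ℕ) (p : ℝ) (c : ℤ) :
    binomTail k p c + lowTail k p (c - 1) = 1 := by
  have h : binomTail k p c + lowTail k p (c - 1)
      = ∑ j ∈ Finset.range (k + 1), (Nat.choose k j : ℝ) * p ^ j * (1 - p) ^ (k - j) := by
    rw [binomTail, lowTail, ← Finset.sum_add_distrib]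
    refine Finset.sum_congr rfl (fun j _ => ?_)
    by_cases h : c ≤ (j : ℤ)
    · rw [if_pos h, if_neg (by omega)]; ring
    · rw [if_neg h, if_pos (by omega)]; ring
  rw [h, sum_all]

lemma binomTail_eq (k : ℕ) (p : ℝ) (c : ℤ) :
    binomTail k p c = 1 - lowTail k p (c - 1) := by
  have := tail_add_low k p c; linarith

lemma lowTail_zero (k : ℕ) (p : ℝ) : lowTail k p 0 = (1 - p) ^ k := by
  rw [lowTail, Finset.sum_eq_single 0]
  · simp
  · intro j hj hj0
    rw [if_neg (by exact_mod_cast fun h => hj0 (by omega))]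
  · intro h; simp at h

lemma lowTail_succ (k d : ℕ) (p : ℝ) (hdk : d + 1 ≤ k) :
    lowTail k p ((d : ℤ) + 1) = lowTail k p d
      + (Nat.choose k (d+1) : ℝ) * p ^ (d+1) * (1 - p) ^ (k - (d+1)) := by
  rw [lowTail, lowTail, ← sub_eq_iff_eq_add', ← Finset.sum_sub_distrib]
  have h1 : ∀ j ∈ Finset.range (k+1),
      ((if (j:ℤ) ≤ (d:ℤ) + 1 then (Nat.choose k j : ℝ) * p ^ j * (1 - p) ^ (k - j) else 0)
        - (if (j:ℤ) ≤ (d:ℤ) then (Nat.choose k j : ℝ) * p ^ j * (1 - p) ^ (k - j) else 0))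
      = if j = d + 1 then (Nat.choose k j : ℝ) * p ^ j * (1 - p) ^ (k - j) else 0 := by
    intro j _
    by_cases h : j = d + 1
    · subst h
      rw [if_pos (by push_cast; omega), if_neg (by push_cast; omega), if_pos rfl]; ring
    · rw [if_neg h]
      by_cases h2 : (j:ℤ) ≤ (d:ℤ)
      · rw [if_pos (by omega), if_pos h2]; ring
      · rw [if_neg (by push_cast at h2 ⊢; omega), if_neg h2]; ring
  rw [Finset.sum_congr rfl h1, Finset.sum_ite_eq' (Finset.range (k+1)) (d+1)]
  rw [if_pos (by simp; omega)]

lemma lowTail_one (k : ℕ) (p : ℝ) (hk : 1 ≤ k) :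
    lowTail k p 1 = (1 - p) ^ k + (k : ℝ) * p * (1 - p) ^ (k - 1) := by
  have h := lowTail_succ k 0 p (by omega)
  norm_num at h
  rw [h, lowTail_zero]

lemma lowTail_two (k : ℕ) (p : ℝ) (hk : 2 ≤ k) :
    lowTail k p 2 = (1 - p) ^ k + (k : ℝ) * p * (1 - p) ^ (k - 1)
      + ((k : ℝ) * (k - 1) / 2) * p ^ 2 * (1 - p) ^ (k - 2) := by
  have h2 := lowTail_succ k 1 p (by omega)
  norm_num at h2
  rw [h2, lowTail_one k p (by omega)]
  have : (Nat.choose k 2 : ℝ) = (k : ℝ) * (k - 1) / 2 := by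
    rw [Nat.choose_two_right]
    rw [Nat.cast_div (by exact Nat.even_mul_pred_self k |>.two_dvd) (by norm_num)]
    push_cast [Nat.cast_sub (by omega : 1 ≤ k)]
    ring
  rw [this]

lemma lowTail_nonneg (k : ℕ) (p : ℝ) (d : ℤ) (h0 : 0 ≤ p) (h1 : p ≤ 1) :
    0 ≤ lowTail k p d := by
  apply Finset.sum_nonneg
  intro j _
  split
  · refine mul_nonneg (mul_nonneg (by positivity) (by positivity)) (pow_nonneg (by linarith) _)
  · exact le_refl 0


/-! ### Numeric facts -/

lemma exp_one_lb : (2.7182818 : ℝ) ≤ Real.exp 1 := by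
  have := Real.exp_one_gt_d9; linarith

lemma exp_pow_ge (c : ℝ) (n : ℕ) (hn : n ≠ 0) (hc : 0 ≤ c)
    (h : c ^ n ≤ (2.7182818 : ℝ) ^ n) : c ≤ Real.exp 1 :=
  le_of_pow_le_pow_left₀ hn (Real.exp_pos 1).le
    (h.trans (pow_le_pow_left₀ (by norm_num) exp_one_lb n))

lemma exp_nat_base (n : ℕ) : Real.exp (n : ℝ) = Real.exp 1 ^ n := by
  rw [← Real.exp_nat_mul]; norm_num

lemma exp029 : (4 : ℝ) / 3 ≤ Real.exp 0.29 := by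
  refine le_of_pow_le_pow_left₀ (n := 100) (by norm_num) (Real.exp_pos _).le ?_
  have h1 : (Real.exp 0.29) ^ 100 = Real.exp 1 ^ 29 := by
    rw [← Real.exp_nat_mul, show ((100 : ℕ) : ℝ) * 0.29 = ((29 : ℕ) : ℝ) by norm_num,
      exp_nat_base]
  rw [h1]
  calc ((4:ℝ)/3) ^ 100 ≤ (2.7182818 : ℝ) ^ 29 := by norm_num
    _ ≤ Real.exp 1 ^ 29 := pow_le_pow_left₀ (by norm_num) exp_one_lb 29

lemma exp127 : (38 : ℝ) / 7 ≤ Real.exp (12 / 7) := by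
  refine le_of_pow_le_pow_left₀ (n := 7) (by norm_num) (Real.exp_pos _).le ?_
  have h1 : (Real.exp (12/7)) ^ 7 = Real.exp 1 ^ 12 := by
    rw [← Real.exp_nat_mul, show ((7 : ℕ) : ℝ) * (12/7) = ((12 : ℕ) : ℝ) by norm_num,
      exp_nat_base]
  rw [h1]
  calc ((38:ℝ)/7) ^ 7 ≤ (2.7182818 : ℝ) ^ 12 := by norm_num
    _ ≤ Real.exp 1 ^ 12 := pow_le_pow_left₀ (by norm_num) exp_one_lb 12

lemma exp95 : (6 : ℝ) ≤ Real.exp (9 / 5) := by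
  refine le_of_pow_le_pow_left₀ (n := 5) (by norm_num) (Real.exp_pos _).le ?_
  have h1 : (Real.exp (9/5)) ^ 5 = Real.exp 1 ^ 9 := by
    rw [← Real.exp_nat_mul, show ((5 : ℕ) : ℝ) * (9/5) = ((9 : ℕ) : ℝ) by norm_num,
      exp_nat_base]
  rw [h1]
  calc (6:ℝ) ^ 5 ≤ (2.7182818 : ℝ) ^ 9 := by norm_num
    _ ≤ Real.exp 1 ^ 9 := pow_le_pow_left₀ (by norm_num) exp_one_lb 9

lemma exp5617 : (26 : ℝ) ≤ Real.exp (56 / 17) := by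
  refine le_of_pow_le_pow_left₀ (n := 17) (by norm_num) (Real.exp_pos _).le ?_
  have h1 : (Real.exp (56/17)) ^ 17 = Real.exp 1 ^ 56 := by
    rw [← Real.exp_nat_mul, show ((17 : ℕ) : ℝ) * (56/17) = ((56 : ℕ) : ℝ) by norm_num,
      exp_nat_base]
  rw [h1]
  calc (26:ℝ) ^ 17 ≤ (2.7182818 : ℝ) ^ 56 := by norm_num
    _ ≤ Real.exp 1 ^ 56 := pow_le_pow_left₀ (by norm_num) exp_one_lb 56

lemma exp_ge_two : (2 : ℝ) ≤ Real.exp 1 := by linarith [exp_one_lb]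

lemma log2_le : Real.log 2 ≤ 3 / 4 := by
  rw [Real.log_le_iff_le_exp (by norm_num)]
  refine le_of_pow_le_pow_left₀ (n := 4) (by norm_num) (Real.exp_pos _).le ?_
  have h1 : (Real.exp (3/4)) ^ 4 = Real.exp 1 ^ 3 := by
    rw [← Real.exp_nat_mul, show ((4 : ℕ) : ℝ) * (3/4) = ((3 : ℕ) : ℝ) by norm_num,
      exp_nat_base]
  rw [h1]
  calc (2:ℝ) ^ 4 ≤ (2.7182818 : ℝ) ^ 3 := by norm_num
    _ ≤ Real.exp 1 ^ 3 := pow_le_pow_left₀ (by norm_num) exp_one_lb 3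

lemma one_sub_le_exp (y : ℝ) : 1 - y ≤ Real.exp (-y) := by
  have := Real.add_one_le_exp (-y); linarith

lemma pow_one_sub_le_exp (p : ℝ) (k : ℕ) (h1 : p ≤ 1) :
    (1 - p) ^ k ≤ Real.exp (-((k : ℕ) * p)) := by
  calc (1 - p) ^ k ≤ (Real.exp (-p)) ^ k :=
        pow_le_pow_left₀ (by linarith) (one_sub_le_exp p) k
    _ = Real.exp (-((k : ℕ) * p)) := by rw [← Real.exp_nat_mul]; ring_nf

/-! ### L1 : `Pr[Bin(k,p) ≥ 1] ≥ 1/4` when `kp ≥ 0.29` -/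

lemma L1 (k : ℕ) (p : ℝ) (h0 : 0 ≤ p) (h1 : p ≤ 1) (h : 0.29 ≤ (k : ℝ) * p) :
    (1 : ℝ) / 4 ≤ binomTail k p 1 := by
  rw [binomTail_eq]
  have h2 : lowTail k p (1 - 1) = (1 - p) ^ k := by
    norm_num [lowTail_zero]
  rw [h2]
  have h3 : (1 - p) ^ k ≤ Real.exp (-((k : ℝ) * p)) := pow_one_sub_le_exp p k h1
  have h4 : Real.exp (-((k : ℝ) * p)) ≤ Real.exp (-(0.29 : ℝ)) :=
    Real.exp_le_exp.mpr (by linarith)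
  have h5 : Real.exp (-(0.29 : ℝ)) ≤ 3 / 4 := by
    rw [Real.exp_neg]
    rw [inv_le_comm₀ (Real.exp_pos _) (by norm_num)]
    calc (3/4 : ℝ)⁻¹ = 4/3 := by norm_num
      _ ≤ Real.exp 0.29 := exp029
  linarith

/-! ### binomial sum -/

lemma binom_sum (k : ℕ) (x y : ℝ) :
    ∑ j ∈ Finset.range (k + 1), (Nat.choose k j : ℝ) * x ^ j * y ^ (k - j) = (x + y) ^ k := by
  rw [add_pow]
  exact Finset.sum_congr rfl fun j _ => by ring

/-! ### Chernoff bound for the lower tail -/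

lemma chernoff (k d : ℕ) (p : ℝ) (hd : 1 ≤ d) (h0 : 0 ≤ p) (h1 : p ≤ 1)
    (hdl : (d : ℝ) ≤ (k : ℝ) * p / 2) :
    lowTail k p d ≤ Real.exp ((d : ℝ) * Real.log ((k : ℝ) * p / d) + d - (k : ℝ) * p) := by
  set lam : ℝ := (k : ℝ) * p with hlam
  have hdpos : (0 : ℝ) < d := by exact_mod_cast hd
  have hlampos : 0 < lam := by nlinarith
  set ρ : ℝ := lam / d with hρ
  have hρpos : 0 < ρ := div_pos hlampos hdpos
  have hρ1 : 1 ≤ ρ := by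
    rw [hρ, le_div_iff₀ hdpos]; nlinarith
  have hq : 0 ≤ 1 - p := by linarith
  have step1 : lowTail k p d ≤ ρ ^ d * ((p / ρ + (1 - p)) ^ k) := by
    rw [lowTail]
    have : ρ ^ d * ((p / ρ + (1 - p)) ^ k)
        = ∑ j ∈ Finset.range (k + 1),
            ρ ^ d * ((Nat.choose k j : ℝ) * (p / ρ) ^ j * (1 - p) ^ (k - j)) := by
      rw [← Finset.mul_sum, binom_sum]
    rw [this]
    apply Finset.sum_le_sum
    intro j _
    by_cases hjd : (j : ℤ) ≤ (d : ℤ)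
    · rw [if_pos hjd]
      have hjd' : j ≤ d := by exact_mod_cast hjd
      have key : ρ ^ d * (p / ρ) ^ j = ρ ^ (d - j) * p ^ j := by
        rw [pow_sub₀ ρ (ne_of_gt hρpos) hjd', div_pow, div_eq_mul_inv]; ring
      have hterm : 0 ≤ (Nat.choose k j : ℝ) * p ^ j * (1 - p) ^ (k - j) := by
        apply mul_nonneg (mul_nonneg (by positivity) (by positivity)) (pow_nonneg hq _)
      have hge1 : 1 ≤ ρ ^ (d - j) := one_le_pow₀ hρ1
      calc (Nat.choose k j : ℝ) * p ^ j * (1 - p) ^ (k - j)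
          ≤ ρ ^ (d - j) * ((Nat.choose k j : ℝ) * p ^ j * (1 - p) ^ (k - j)) := by
            nlinarith
        _ = ρ ^ d * ((Nat.choose k j : ℝ) * (p / ρ) ^ j * (1 - p) ^ (k - j)) := by
            rw [show ρ ^ d * ((Nat.choose k j : ℝ) * (p / ρ) ^ j * (1 - p) ^ (k - j))
              = (ρ ^ d * (p / ρ) ^ j) * ((Nat.choose k j : ℝ) * (1 - p) ^ (k - j)) by ring,
              key]
            ring
    · rw [if_neg hjd]
      have : (0:ℝ) ≤ (p / ρ) ^ j := pow_nonneg (by positivity) j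
      apply mul_nonneg (pow_nonneg hρpos.le _)
      apply mul_nonneg (mul_nonneg (by positivity) this) (pow_nonneg hq _)
  have hfrac : p / ρ + (1 - p) = 1 - p * (1 - 1/ρ) := by
    field_simp; ring
  have hnn : 0 ≤ 1 - p * (1 - 1/ρ) := by
    have h1ρ : 0 ≤ 1 - 1/ρ := by
      have : 1/ρ ≤ 1 := by
        rw [div_le_one hρpos]; exact hρ1
      linarith
    have h1ρ' : 1 - 1/ρ ≤ 1 := by
      have : 0 ≤ 1/ρ := by positivity
      linarith
    have : p * (1 - 1/ρ) ≤ 1 := mul_le_one₀ h1 h1ρ h1ρ'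
    linarith
  have step2 : (p / ρ + (1 - p)) ^ k ≤ Real.exp ((d : ℝ) - lam) := by
    rw [hfrac]
    calc (1 - p * (1 - 1/ρ)) ^ k ≤ (Real.exp (-(p * (1 - 1/ρ)))) ^ k :=
          pow_le_pow_left₀ hnn (one_sub_le_exp _) k
      _ = Real.exp (-((k:ℝ) * (p * (1 - 1/ρ)))) := by rw [← Real.exp_nat_mul]; ring_nf
      _ = Real.exp ((d : ℝ) - lam) := by
          congr 1
          have : lam / ρ = (d : ℝ) := by
            rw [hρ]; field_simp
          have expand : (k:ℝ) * (p * (1 - 1/ρ)) = lam - lam / ρ := by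
            rw [hlam]; ring
          rw [expand, this]; ring
  have step3 : ρ ^ d = Real.exp ((d : ℝ) * Real.log ρ) := by
    rw [← Real.exp_log hρpos, ← Real.exp_nat_mul, Real.exp_log hρpos]
  calc lowTail k p d ≤ ρ ^ d * ((p / ρ + (1 - p)) ^ k) := step1
    _ ≤ ρ ^ d * Real.exp ((d : ℝ) - lam) := by
        apply mul_le_mul_of_nonneg_left step2 (pow_nonneg hρpos.le _)
    _ = Real.exp ((d : ℝ) * Real.log ρ + ((d : ℝ) - lam)) := by
        rw [step3, ← Real.exp_add]
    _ = Real.exp ((d : ℝ) * Real.log ((k : ℝ) * p / d) + d - lam) := by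
        rw [hρ, hlam]; ring_nf


lemma pow_eq_exp (x : ℝ) (hx : 0 < x) (n : ℕ) :
    x ^ n = Real.exp ((n : ℝ) * Real.log x) := by
  rw [Real.exp_nat_mul, Real.exp_log hx]

lemma A2_mono (k : ℕ) (hk : 1 ≤ k) {q q' : ℝ} (hq0 : 0 < q) (hqq : q ≤ q') (hq1 : q' ≤ 1) :
    (k : ℝ) * q ^ (k - 1) - ((k : ℝ) - 1) * q ^ k
      ≤ (k : ℝ) * q' ^ (k - 1) - ((k : ℝ) - 1) * q' ^ k := by
  have hq'0 : 0 < q' := lt_of_lt_of_le hq0 hqq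
  have hq1' : q ≤ 1 := hqq.trans hq1
  set n := k - 1 with hn
  have hKn : ((n : ℕ) : ℝ) = (k : ℝ) - 1 := by
    rw [hn, Nat.cast_sub hk]; norm_num
  have hK1 : (1 : ℝ) ≤ (k : ℝ) := by exact_mod_cast hk
  have hqk : q ^ k = q ^ n * q := by rw [← pow_succ, hn, Nat.sub_add_cancel hk]
  have hq'k : q' ^ k = q' ^ n * q' := by rw [← pow_succ, hn, Nat.sub_add_cancel hk]
  set a := (k : ℝ) - ((k : ℝ) - 1) * q with hadef
  set b := (k : ℝ) - ((k : ℝ) - 1) * q' with hbdef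
  have hb1 : q' ≤ b := by rw [hbdef]; nlinarith
  have hb0 : 0 < b := lt_of_lt_of_le hq'0 hb1
  have ha0 : 0 < a := by rw [hadef]; nlinarith
  have lhs_eq : (k : ℝ) * q ^ (k - 1) - ((k : ℝ) - 1) * q ^ k = q ^ n * a := by
    rw [← hn, hqk, hadef]; ring
  have rhs_eq : (k : ℝ) * q' ^ (k - 1) - ((k : ℝ) - 1) * q' ^ k = q' ^ n * b := by
    rw [← hn, hq'k, hbdef]; ring
  rw [lhs_eq, rhs_eq]
  have hlog : (n : ℝ) * Real.log q + Real.log a ≤ (n : ℝ) * Real.log q' + Real.log b := by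
    have h1 : Real.log a - Real.log b ≤ (((k:ℝ) - 1) * (q' - q)) / b := by
      have hd := Real.log_le_sub_one_of_pos (show 0 < a / b by positivity)
      rw [Real.log_div (ne_of_gt ha0) (ne_of_gt hb0)] at hd
      have heq : a / b - 1 = (((k:ℝ) - 1) * (q' - q)) / b := by
        field_simp; rw [hadef, hbdef]; ring
      linarith
    have hnum : 0 ≤ ((k:ℝ) - 1) * (q' - q) := mul_nonneg (by linarith) (by linarith)
    have h2 : (((k:ℝ) - 1) * (q' - q)) / b ≤ (((k:ℝ) - 1) * (q' - q)) / q' :=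
      div_le_div_of_nonneg_left hnum hq'0 hb1
    have h3 : (q' - q) / q' ≤ Real.log q' - Real.log q := by
      have hd := Real.log_le_sub_one_of_pos (show 0 < q / q' by positivity)
      rw [Real.log_div (ne_of_gt hq0) (ne_of_gt hq'0)] at hd
      have heq : 1 - q / q' = (q' - q) / q' := by field_simp
      linarith
    have h4 : (((k:ℝ) - 1) * (q' - q)) / q' ≤ ((k:ℝ) - 1) * (Real.log q' - Real.log q) := by
      rw [mul_div_assoc]
      exact mul_le_mul_of_nonneg_left h3 (by linarith)
    rw [hKn]
    nlinarith [h1, h2, h4]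
  calc q ^ n * a = Real.exp ((n : ℝ) * Real.log q + Real.log a) := by
        rw [Real.exp_add, ← pow_eq_exp q hq0, Real.exp_log ha0]
    _ ≤ Real.exp ((n : ℝ) * Real.log q' + Real.log b) := Real.exp_le_exp.mpr hlog
    _ = q' ^ n * b := by rw [Real.exp_add, ← pow_eq_exp q' hq'0, Real.exp_log hb0]

lemma A2_endpoint (k : ℕ) (hk : 3 ≤ k) :
    (k : ℝ) * (1 - 2 / (k : ℝ)) ^ (k - 1) - ((k : ℝ) - 1) * (1 - 2 / (k : ℝ)) ^ k ≤ 1 / 2 := by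
  have hK3 : (3 : ℝ) ≤ (k : ℝ) := by exact_mod_cast hk
  have hKpos : (0 : ℝ) < (k : ℝ) := by linarith
  have hq0 : (0 : ℝ) < 1 - 2 / (k : ℝ) := by
    have : 2 / (k : ℝ) ≤ 2 / 3 := by
      apply div_le_div_of_nonneg_left (by norm_num) (by norm_num) hK3
    linarith
  have hqk : (1 - 2 / (k : ℝ)) ^ k = (1 - 2 / (k : ℝ)) ^ (k - 1) * (1 - 2 / (k : ℝ)) := by
    rw [← pow_succ, Nat.sub_add_cancel (by omega)]
  have hval : (k : ℝ) - ((k : ℝ) - 1) * (1 - 2 / (k : ℝ)) = 3 - 2 / (k : ℝ) := by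
    field_simp; ring
  have heq : (k : ℝ) * (1 - 2 / (k : ℝ)) ^ (k - 1) - ((k : ℝ) - 1) * (1 - 2 / (k : ℝ)) ^ k
      = (1 - 2 / (k : ℝ)) ^ (k - 1) * (3 - 2 / (k : ℝ)) := by
    rw [hqk, ← hval]; ring
  rw [heq]
  by_cases hk9 : k ≤ 9
  · interval_cases k <;> norm_num
  · push_neg at hk9
    have hk10 : (10 : ℝ) ≤ (k : ℝ) := by exact_mod_cast hk9
    have h1 : (1 - 2 / (k : ℝ)) ^ (k - 1) ≤ Real.exp (-(9/5)) := by
      have hp := pow_one_sub_le_exp (2 / (k : ℝ)) (k - 1) (by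
        have : 2 / (k : ℝ) ≤ 2 / 3 := by
          apply div_le_div_of_nonneg_left (by norm_num) (by norm_num) hK3
        linarith)
      refine hp.trans (Real.exp_le_exp.mpr ?_)
      have hcast : ((k - 1 : ℕ) : ℝ) = (k : ℝ) - 1 := by
        rw [Nat.cast_sub (by omega)]; norm_num
      rw [hcast]
      have hexp : ((k : ℝ) - 1) * (2 / (k : ℝ)) = 2 * ((k : ℝ) - 1) / (k : ℝ) := by ring
      have h9 : 9/5 ≤ ((k : ℝ) - 1) * (2 / (k : ℝ)) := by
        rw [hexp, le_div_iff₀ hKpos]; nlinarith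
      linarith
    have h2 : Real.exp (-(9/5 : ℝ)) ≤ 1 / 6 := by
      rw [Real.exp_neg, inv_le_comm₀ (Real.exp_pos _) (by norm_num)]
      calc ((1:ℝ)/6)⁻¹ = 6 := by norm_num
        _ ≤ Real.exp (9/5) := exp95
    have h3 : (3 : ℝ) - 2 / (k : ℝ) ≤ 3 := by
      have : 0 ≤ 2 / (k : ℝ) := by positivity
      linarith
    calc (1 - 2 / (k : ℝ)) ^ (k - 1) * (3 - 2 / (k : ℝ))
        ≤ (1/6 : ℝ) * 3 := by
          apply mul_le_mul (h1.trans h2) h3 (by linarith [hq0]) (by norm_num)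
      _ = 1 / 2 := by norm_num


lemma exp_neg_le (x : ℝ) (c : ℝ) (hc : 0 < c) (h : c⁻¹ ≤ Real.exp x) :
    Real.exp (-x) ≤ c := by
  rw [Real.exp_neg, inv_le_comm₀ (Real.exp_pos _) hc]
  exact h

set_option maxHeartbeats 1000000 in
lemma A3_num (k : ℕ) (h5 : 5 ≤ k) (h16 : k ≤ 16) :
    (1 - 4/(k:ℝ))^(k-2) * 25 ≤ 1/2 := by
  interval_cases k <;> norm_num

set_option maxHeartbeats 1000000 in
/-- Main half-median lemma : `Pr[Bin(k,p) ≥ ⌈kp/2⌉] ≥ 1/2` whenever `kp > 1`. -/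
lemma L2 (k : ℕ) (p : ℝ) (h0 : 0 < p) (h1 : p ≤ 1) (hl : 1 < (k : ℝ) * p) :
    1 / 2 ≤ binomTail k p ⌈(k : ℝ) * p / 2⌉ := by
  have hk1 : 1 ≤ k := by
    by_contra h
    push_neg at h
    interval_cases k <;> norm_num at hl <;> linarith
  have hK0 : (0 : ℝ) < (k : ℝ) := by
    have : (1:ℝ) ≤ (k:ℝ) := by exact_mod_cast hk1
    linarith
  rcases le_or_gt ((k : ℝ) * p) 2 with h2 | h2
  · -- case 1 < λ ≤ 2 : threshold 1
    have hc : ⌈(k : ℝ) * p / 2⌉ = 1 := by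
      have hu := Int.ceil_le.mpr (show (k : ℝ) * p / 2 ≤ ((1 : ℤ) : ℝ) by push_cast; linarith)
      have hlo := Int.lt_ceil.mpr (show ((0 : ℤ) : ℝ) < (k : ℝ) * p / 2 by push_cast; linarith)
      omega
    rw [hc, binomTail_eq]
    have hlow : lowTail k p (1 - 1) = (1 - p) ^ k := by norm_num [lowTail_zero]
    rw [hlow]
    have h3 := pow_one_sub_le_exp p k h1
    have h4 : Real.exp (-((k : ℝ) * p)) ≤ Real.exp (-(1 : ℝ)) :=
      Real.exp_le_exp.mpr (by linarith)
    have h5 : Real.exp (-(1 : ℝ)) ≤ 1 / 2 := by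
      apply exp_neg_le _ _ (by norm_num)
      calc ((1:ℝ)/2)⁻¹ = 2 := by norm_num
        _ ≤ Real.exp 1 := exp_ge_two
    linarith
  rcases le_or_gt ((k : ℝ) * p) 4 with h4 | h4
  · -- case 2 < λ ≤ 4 : threshold 2
    have hk3 : 3 ≤ k := by
      by_contra h
      push_neg at h
      have hKle : (k : ℝ) ≤ 2 := by exact_mod_cast (by omega : k ≤ 2)
      nlinarith
    have hc : ⌈(k : ℝ) * p / 2⌉ = 2 := by
      have hu := Int.ceil_le.mpr (show (k : ℝ) * p / 2 ≤ ((2 : ℤ) : ℝ) by push_cast; linarith)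
      have hlo := Int.lt_ceil.mpr (show ((1 : ℤ) : ℝ) < (k : ℝ) * p / 2 by push_cast; linarith)
      omega
    rw [hc, binomTail_eq]
    have hlow : lowTail k p (2 - 1) = lowTail k p 1 := by norm_num
    rw [hlow, lowTail_one k p (by omega)]
    have hqk : (1 - p) ^ k = (1 - p) ^ (k - 1) * (1 - p) := by
      rw [← pow_succ, Nat.sub_add_cancel (by omega)]
    have hA : (1 - p) ^ k + (k : ℝ) * p * (1 - p) ^ (k - 1)
        = (k : ℝ) * (1 - p) ^ (k - 1) - ((k : ℝ) - 1) * (1 - p) ^ k := by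
      rw [hqk]; ring
    rw [hA]
    have hq1' : 1 - p < 1 - 2 / (k : ℝ) := by
      have : 2 / (k : ℝ) < p := by rw [div_lt_iff₀ hK0]; nlinarith
      linarith
    have hend := A2_endpoint k hk3
    rcases le_or_gt (1 - p) 0 with hq0 | hq0
    · have hqz : 1 - p = 0 := le_antisymm hq0 (by linarith)
      rw [hqz, zero_pow (by omega : k - 1 ≠ 0), zero_pow (by omega : k ≠ 0)]
      norm_num
    · have hq1end : 1 - 2 / (k : ℝ) ≤ 1 := by
        have : 0 ≤ 2 / (k : ℝ) := by positivity
        linarith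
      have hmono := A2_mono k (by omega) hq0 (le_of_lt hq1') hq1end
      linarith
  rcases le_or_gt ((k : ℝ) * p) 6 with h6 | h6
  · -- case 4 < λ ≤ 6 : threshold 3
    have hk5 : 5 ≤ k := by
      by_contra h
      push_neg at h
      have hKle : (k : ℝ) ≤ 4 := by exact_mod_cast (by omega : k ≤ 4)
      nlinarith
    have hc : ⌈(k : ℝ) * p / 2⌉ = 3 := by
      have hu := Int.ceil_le.mpr (show (k : ℝ) * p / 2 ≤ ((3 : ℤ) : ℝ) by push_cast; linarith)
      have hlo := Int.lt_ceil.mpr (show ((2 : ℤ) : ℝ) < (k : ℝ) * p / 2 by push_cast; linarith)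
      omega
    rw [hc, binomTail_eq]
    have hlow : lowTail k p (3 - 1) = lowTail k p 2 := by norm_num
    rw [hlow, lowTail_two k p (by omega)]
    have hq0 : (0:ℝ) ≤ 1 - p := by linarith
    have hqk : (1-p) ^ k = (1-p) ^ (k - 2) * (1-p) ^ 2 := by
      rw [← pow_add]; congr 1; omega
    have hqk1 : (1-p) ^ (k - 1) = (1-p) ^ (k - 2) * (1-p) := by
      rw [← pow_succ]; congr 1; omega
    have hqpow : (0:ℝ) ≤ (1-p) ^ (k-2) := pow_nonneg hq0 _
    have hbr : (0:ℝ) ≤ 1 + (k:ℝ)*p + ((k:ℝ)*p)^2/2 := by nlinarith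
    have hbound : (1-p) ^ k + (k : ℝ) * p * (1-p) ^ (k - 1)
          + ((k : ℝ) * ((k:ℝ) - 1) / 2) * p ^ 2 * (1-p) ^ (k - 2)
        ≤ (1-p) ^ (k-2) * (1 + (k:ℝ)*p + ((k:ℝ)*p)^2/2) := by
      rw [hqk, hqk1]
      have step : (1-p)^2 + (k:ℝ)*p*(1-p) + ((k:ℝ)*((k:ℝ)-1)/2)*p^2
          ≤ 1 + (k:ℝ)*p + ((k:ℝ)*p)^2/2 := by nlinarith
      calc (1-p)^(k-2) * (1-p)^2 + (k:ℝ)*p*((1-p)^(k-2)*(1-p))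
            + ((k:ℝ)*((k:ℝ)-1)/2)*p^2*(1-p)^(k-2)
          = (1-p)^(k-2) * ((1-p)^2 + (k:ℝ)*p*(1-p) + ((k:ℝ)*((k:ℝ)-1)/2)*p^2) := by ring
        _ ≤ (1-p)^(k-2) * (1 + (k:ℝ)*p + ((k:ℝ)*p)^2/2) :=
            mul_le_mul_of_nonneg_left step hqpow
    rcases le_or_gt k 16 with hk16 | hk17
    · have h25 : 1 + (k:ℝ)*p + ((k:ℝ)*p)^2/2 ≤ 25 := by nlinarith
      have hq4 : 1 - p ≤ 1 - 4/(k:ℝ) := by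
        have : 4 / (k : ℝ) < p := by rw [div_lt_iff₀ hK0]; nlinarith
        linarith
      have hpow : (1-p)^(k-2) ≤ (1 - 4/(k:ℝ))^(k-2) := pow_le_pow_left₀ hq0 hq4 _
      have hnum : (1 - 4/(k:ℝ))^(k-2) * 25 ≤ 1/2 := A3_num k hk5 hk16
      have hpos4 : (0:ℝ) ≤ (1 - 4/(k:ℝ))^(k-2) := by
        apply pow_nonneg
        have : 4 / (k : ℝ) < p := by rw [div_lt_iff₀ hK0]; nlinarith
        linarith
      have : (1-p) ^ (k-2) * (1 + (k:ℝ)*p + ((k:ℝ)*p)^2/2)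
          ≤ (1 - 4/(k:ℝ))^(k-2) * 25 := mul_le_mul hpow h25 hbr hpos4
      linarith
    · -- k ≥ 17
      have hK17 : (17 : ℝ) ≤ (k : ℝ) := by exact_mod_cast hk17
      have hqexp : (1-p) ^ (k-2) ≤ Real.exp (-((k:ℝ)*p) + 12/17) := by
        have hp := pow_one_sub_le_exp p (k-2) h1
        refine hp.trans (Real.exp_le_exp.mpr ?_)
        have hcast : ((k - 2 : ℕ) : ℝ) = (k : ℝ) - 2 := by
          rw [Nat.cast_sub (by omega)]; norm_num
        rw [hcast]
        -- -((k-2) p) = -(kp) + 2p and 2p ≤ 12/17 since p ≤ 6/k ≤ 6/17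
        have hp617 : p ≤ 6 / 17 := by
          have h6k : p ≤ 6 / (k:ℝ) := by rw [le_div_iff₀ hK0]; nlinarith
          refine h6k.trans ?_
          apply div_le_div_of_nonneg_left (by norm_num) (by norm_num) hK17
        nlinarith
      have h13 : (1 + (k:ℝ)*p + ((k:ℝ)*p)^2/2) ≤ 13 * Real.exp ((k:ℝ)*p - 4) := by
        set z := (k:ℝ)*p - 4 with hz
        have hz0 : 0 ≤ z := by rw [hz]; linarith
        have hez : (1 + z/2)^2 ≤ Real.exp z := by
          have h2' := Real.add_one_le_exp (z/2)
          have hsq : (1 + z/2)^2 ≤ (Real.exp (z/2))^2 := by nlinarith [Real.exp_pos (z/2)]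
          have : (Real.exp (z/2))^2 = Real.exp z := by
            rw [← Real.exp_nat_mul]; congr 1; push_cast; ring
          linarith
        have hpoly : 1 + (k:ℝ)*p + ((k:ℝ)*p)^2/2 ≤ 13 * (1 + z/2)^2 := by
          rw [hz]; nlinarith
        calc 1 + (k:ℝ)*p + ((k:ℝ)*p)^2/2 ≤ 13 * (1 + z/2)^2 := hpoly
          _ ≤ 13 * Real.exp z := by linarith
      have hfin : (1-p) ^ (k-2) * (1 + (k:ℝ)*p + ((k:ℝ)*p)^2/2)
          ≤ Real.exp (-((k:ℝ)*p) + 12/17) * (13 * Real.exp ((k:ℝ)*p - 4)) := by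
        apply mul_le_mul hqexp h13 hbr (Real.exp_pos _).le
      have hval : Real.exp (-((k:ℝ)*p) + 12/17) * (13 * Real.exp ((k:ℝ)*p - 4))
          = 13 * Real.exp (-(56/17)) := by
        rw [mul_left_comm, ← Real.exp_add]
        congr 1
        ring
      have hlast : (13:ℝ) * Real.exp (-(56/17)) ≤ 1/2 := by
        have : Real.exp (-(56/17 : ℝ)) ≤ 1/26 := by
          apply exp_neg_le _ _ (by norm_num)
          calc ((1:ℝ)/26)⁻¹ = 26 := by norm_num
            _ ≤ Real.exp (56/17) := exp5617
        linarith
      linarith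
  · -- case λ > 6 : Chernoff
    set c := ⌈(k : ℝ) * p / 2⌉ with hc
    have hc3 : 3 < c := by
      rw [hc]
      exact Int.lt_ceil.mpr (show ((3 : ℤ) : ℝ) < (k : ℝ) * p / 2 by push_cast; linarith)
    set dn : ℕ := (c - 1).toNat with hdn
    have hdc : ((dn : ℕ) : ℤ) = c - 1 := Int.toNat_of_nonneg (by omega)
    have hdnR : ((dn : ℕ) : ℝ) = (c : ℝ) - 1 := by
      have := congrArg (fun z : ℤ => (z : ℝ)) hdc
      push_cast at this
      exact_mod_cast this
    have hd1 : 1 ≤ dn := by omega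
    have hdl : ((dn : ℕ) : ℝ) ≤ (k : ℝ) * p / 2 := by
      rw [hdnR]
      have := Int.ceil_lt_add_one ((k : ℝ) * p / 2)
      rw [← hc] at this
      linarith
    have hcher := chernoff k dn p hd1 h0.le h1 hdl
    rw [binomTail_eq]
    have hlow : lowTail k p (c - 1) = lowTail k p ((dn : ℕ) : ℤ) := by rw [hdc]
    rw [hlow]
    have hdpos : (0:ℝ) < (dn : ℝ) := by exact_mod_cast hd1
    have hβ1 : 1 ≤ (k : ℝ) * p / (2 * (dn : ℝ)) := by
      rw [le_div_iff₀ (by positivity)]; linarith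
    have hlogsplit : Real.log ((k : ℝ) * p / (dn : ℝ))
        = Real.log 2 + Real.log ((k : ℝ) * p / (2 * (dn : ℝ))) := by
      rw [← Real.log_mul (by norm_num) (by positivity)]
      congr 1
      field_simp
    have hlogβ : Real.log ((k : ℝ) * p / (2 * (dn : ℝ))) ≤ (k : ℝ) * p / (2 * (dn : ℝ)) - 1 :=
      Real.log_le_sub_one_of_pos (by positivity)
    have hlog2nn : 0 ≤ Real.log 2 := Real.log_nonneg (by norm_num)
    have hkey : (dn : ℝ) * Real.log ((k : ℝ) * p / (dn : ℝ)) + (dn : ℝ) - (k : ℝ) * p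
        ≤ -Real.log 2 := by
      have e2 : (dn : ℝ) * ((k : ℝ) * p / (2 * (dn : ℝ)) - 1) = (k : ℝ) * p / 2 - (dn : ℝ) := by
        field_simp
      have e1 : (dn : ℝ) * Real.log ((k : ℝ) * p / (dn : ℝ))
          ≤ (dn : ℝ) * Real.log 2 + ((k : ℝ) * p / 2 - (dn : ℝ)) := by
        rw [hlogsplit, mul_add, ← e2]
        have := mul_le_mul_of_nonneg_left hlogβ hdpos.le
        linarith
      have e3 : ((dn : ℝ) + 1) * Real.log 2 ≤ ((k : ℝ) * p / 2 + 1) * (3 / 4) := by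
        apply mul_le_mul (by linarith) log2_le hlog2nn (by linarith)
      nlinarith
    have hexp : Real.exp ((dn : ℝ) * Real.log ((k : ℝ) * p / (dn : ℝ)) + (dn : ℝ) - (k : ℝ) * p)
        ≤ 1 / 2 := by
      calc Real.exp ((dn : ℝ) * Real.log ((k : ℝ) * p / (dn : ℝ)) + (dn : ℝ) - (k : ℝ) * p)
          ≤ Real.exp (-Real.log 2) := Real.exp_le_exp.mpr hkey
        _ = 1 / 2 := by
            rw [Real.exp_neg, Real.exp_log (by norm_num : (0:ℝ) < 2)]
            norm_num
    linarith


/-! ### Phase structure -/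

noncomputable def Fb (s B : ℝ) (i : ℕ) : ℝ := min B ((1+s)^i)

noncomputable def cth (s : ℝ) (x : ℤ) : ℤ :=
  if s * (x:ℝ) ≤ 1 then 1 else ⌈s * (x:ℝ) / 2⌉

noncomputable def phi (s B : ℝ) (i : ℕ) (x : ℤ) : ℝ :=
  if Fb s B i ≤ (x:ℝ) then 0
  else if 1 < s * (x:ℝ) ∧ Fb s B i ≤ (x:ℝ) * (1 + s/2) then 2 else 4

noncomputable def gv (s B : ℝ) (i : ℕ) (x : ℤ) : ℝ :=
  if Fb s B (i-1) ≤ (x:ℝ) ∧ (x:ℝ) < Fb s B i then (if s * (x:ℝ) ≤ 1 then 4 else 2) else 0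

lemma Fb_one_le (s B : ℝ) (hs : 0 ≤ s) (hB : 1 ≤ B) (i : ℕ) : 1 ≤ Fb s B i :=
  le_min hB (one_le_pow₀ (by linarith))

lemma Fb_le_B (s B : ℝ) (i : ℕ) : Fb s B i ≤ B := min_le_left _ _

lemma Fb_zero (s B : ℝ) (hB : 1 ≤ B) : Fb s B 0 = 1 := by
  rw [Fb, pow_zero]; exact min_eq_right hB

lemma Fb_step (s B : ℝ) (hs : 0 ≤ s) (hB : 0 ≤ B) (i : ℕ) (hi : 1 ≤ i) :
    Fb s B i ≤ Fb s B (i-1) * (1+s) := by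
  have h1s : (0:ℝ) ≤ 1 + s := by linarith
  rw [Fb, Fb, min_mul_of_nonneg _ _ h1s]
  apply min_le_min
  · nlinarith
  · rw [← pow_succ, Nat.sub_add_cancel hi]

lemma phi_nonneg (s B : ℝ) (i : ℕ) (x : ℤ) : 0 ≤ phi s B i x := by
  rw [phi]; split_ifs <;> norm_num

lemma phi_le_four (s B : ℝ) (i : ℕ) (x : ℤ) : phi s B i x ≤ 4 := by
  rw [phi]; split_ifs <;> norm_num

lemma gv_nonneg (s B : ℝ) (i : ℕ) (x : ℤ) : 0 ≤ gv s B i x := by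
  rw [gv]; split_ifs <;> norm_num

lemma phi_mono (s B : ℝ) (hs : 0 ≤ s) (i : ℕ) {x x' : ℤ} (hxx : x ≤ x') :
    phi s B i x' ≤ phi s B i x := by
  have hc : (x:ℝ) ≤ (x':ℝ) := by exact_mod_cast hxx
  have hsx : s * (x:ℝ) ≤ s * (x':ℝ) := mul_le_mul_of_nonneg_left hc hs
  have hxs2 : (x:ℝ) * (1+s/2) ≤ (x':ℝ) * (1+s/2) := by nlinarith
  by_cases hA' : Fb s B i ≤ (x':ℝ)
  · have e : phi s B i x' = 0 := by rw [phi, if_pos hA']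
    rw [e]; exact phi_nonneg _ _ _ _
  · have hA : ¬ Fb s B i ≤ (x:ℝ) := fun h => hA' (le_trans h hc)
    by_cases hB2 : 1 < s * (x:ℝ) ∧ Fb s B i ≤ (x:ℝ) * (1+s/2)
    · have hB2' : 1 < s * (x':ℝ) ∧ Fb s B i ≤ (x':ℝ) * (1+s/2) :=
        ⟨lt_of_lt_of_le hB2.1 hsx, le_trans hB2.2 hxs2⟩
      have e1 : phi s B i x = 2 := by rw [phi, if_neg hA, if_pos hB2]
      have e2 : phi s B i x' = 2 := by rw [phi, if_neg hA', if_pos hB2']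
      rw [e1, e2]
    · have e1 : phi s B i x = 4 := by rw [phi, if_neg hA, if_neg hB2]
      rw [e1]
      linarith [phi_le_four s B i x']

lemma phi_drop (s B : ℝ) (i : ℕ) (hi : 1 ≤ i) (hs : 0 < s) (hB : 0 ≤ B)
    (x y : ℤ) (hx1 : 1 ≤ x) (hy0 : 0 ≤ y) (hcy : cth s x ≤ y)
    (hact1 : Fb s B (i-1) ≤ (x:ℝ)) (hact2 : (x:ℝ) < Fb s B i) :
    phi s B i (x + y) ≤ phi s B i x - gv s B i x := by
  have hxR : (1:ℝ) ≤ (x:ℝ) := by exact_mod_cast hx1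
  have hstep := Fb_step s B hs.le hB i hi
  have hgv : gv s B i x = if s * (x:ℝ) ≤ 1 then 4 else 2 := by
    rw [gv, if_pos ⟨hact1, hact2⟩]
  by_cases hsx : s * (x:ℝ) ≤ 1
  · -- threshold 1, full jump
    have hc1 : (1:ℤ) ≤ y := by
      have : cth s x = 1 := by rw [cth, if_pos hsx]
      omega
    have hxy : ((x + y : ℤ) : ℝ) ≥ (x:ℝ) + 1 := by push_cast; exact_mod_cast (by omega : x + 1 ≤ x + y)
    have hjump : Fb s B i ≤ ((x + y : ℤ) : ℝ) := by
      have h1 : (x:ℝ) * (1 + s) = (x:ℝ) + (x:ℝ) * s := by ring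
      have h2 : (x:ℝ) * s ≤ 1 := by nlinarith
      have h3 : Fb s B i ≤ (x:ℝ) * (1+s) := le_trans hstep (by nlinarith)
      have : (x:ℝ) * (1+s) ≤ (x:ℝ) + 1 := by nlinarith
      linarith
    have hphix : phi s B i x = 4 := by
      rw [phi, if_neg (not_le.mpr hact2), if_neg]
      rintro ⟨ha, _⟩; linarith
    rw [phi, if_pos hjump, hphix, hgv, if_pos hsx]
    norm_num
  · -- threshold ⌈sx/2⌉, half jump
    push_neg at hsx
    have hcy' : (y:ℝ) ≥ s * (x:ℝ) / 2 := by
      have hceil : cth s x = ⌈s * (x:ℝ) / 2⌉ := by rw [cth, if_neg (not_le.mpr hsx)]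
      have : (⌈s * (x:ℝ) / 2⌉ : ℝ) ≥ s * (x:ℝ) / 2 := Int.le_ceil _
      have hyc : ((cth s x : ℤ) : ℝ) ≤ (y:ℝ) := by exact_mod_cast hcy
      rw [hceil] at hyc
      linarith
    have hxy : ((x + y : ℤ) : ℝ) ≥ (x:ℝ) * (1 + s/2) := by push_cast; nlinarith
    have hxyx : (x:ℝ) ≤ ((x + y : ℤ) : ℝ) := by push_cast; exact_mod_cast (by omega : x ≤ x + y)
    rw [hgv, if_neg (not_le.mpr hsx)]
    by_cases hphi2 : Fb s B i ≤ (x:ℝ) * (1 + s/2)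
    · -- φ x = 2, success finishes
      have hphix : phi s B i x = 2 := by
        rw [phi, if_neg (not_le.mpr hact2), if_pos ⟨hsx, hphi2⟩]
      have hfin : Fb s B i ≤ ((x + y : ℤ) : ℝ) := le_trans hphi2 hxy
      rw [phi, if_pos hfin, hphix]; norm_num
    · -- φ x = 4, success reaches the 2-zone (or finishes)
      have hphix : phi s B i x = 4 := by
        rw [phi, if_neg (not_le.mpr hact2), if_neg]
        rintro ⟨_, hb⟩; exact hphi2 hb
      have htarget : phi s B i (x + y) ≤ 2 := by
        rw [phi]
        split_ifs with h1 h2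
        · norm_num
        · norm_num
        · exfalso
          apply h2
          constructor
          · calc (1:ℝ) < s * (x:ℝ) := hsx
              _ ≤ s * ((x + y : ℤ) : ℝ) := mul_le_mul_of_nonneg_left hxyx hs.le
          · calc Fb s B i ≤ Fb s B (i-1) * (1+s) := hstep
              _ ≤ (x:ℝ) * (1+s) := by nlinarith
              _ ≤ ((x:ℝ) * (1 + s/2)) * (1 + s/2) := by nlinarith
              _ ≤ ((x + y : ℤ) : ℝ) * (1 + s/2) := by nlinarith
      rw [hphix]; linarith

lemma exists_phase (s B : ℝ) (hB : 1 ≤ B) (n : ℕ) (x : ℝ) (h1 : 1 ≤ x)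
    (h2 : x < Fb s B n) :
    ∃ i, 1 ≤ i ∧ i ≤ n ∧ Fb s B (i-1) ≤ x ∧ x < Fb s B i := by
  induction n with
  | zero =>
      exfalso
      rw [Fb_zero s B hB] at h2
      linarith
  | succ n ih =>
      by_cases h : x < Fb s B n
      · obtain ⟨i, hi1, hi2, hi3, hi4⟩ := ih h
        exact ⟨i, hi1, hi2.trans (Nat.le_succ n), hi3, hi4⟩
      · push_neg at h
        exact ⟨n + 1, by omega, le_refl _, by simpa using h, h2⟩


/-! ### Measure-theoretic helpers -/

section Meas

variable {Ω : Type*} {mΩ : MeasurableSpace Ω} (P : Measure Ω) [IsProbabilityMeasure P]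

lemma slice_bound (𝓕 : Filtration ℕ mΩ) (X Y : ℕ → Ω → ℤ)
    (hXad : ∀ t, Measurable[𝓕 t] (X t)) (hYad : ∀ t, Measurable[𝓕 (t + 1)] (Y (t + 1)))
    (t : ℕ) (c : ℤ) (x : ℤ) (q : ℝ)
    (hdom : ∀ᵐ ω ∂(P.restrict {ω | X t ω = x}),
      q ≤ (P[({ω' | c ≤ Y (t + 1) ω'}).indicator (fun _ => (1 : ℝ)) | 𝓕 t]) ω) :
    q * (P {ω | X t ω = x}).toReal
      ≤ (P ({ω | X t ω = x} ∩ {ω' | c ≤ Y (t + 1) ω'})).toReal := by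
  set A : Set Ω := {ω | X t ω = x} with hA_def
  set S : Set Ω := {ω' | c ≤ Y (t + 1) ω'} with hS_def
  have hA : MeasurableSet[𝓕 t] A := (hXad t) (MeasurableSet.of_discrete (s := {x}))
  have hS : MeasurableSet S := by
    have : S = Y (t+1) ⁻¹' {z : ℤ | c ≤ z} := rfl
    rw [this]
    exact (𝓕.le (t+1)) _ ((hYad t) (MeasurableSet.of_discrete))
  set f : Ω → ℝ := S.indicator (fun _ => (1 : ℝ)) with hf_def
  have hf_int : Integrable f P := (integrable_const 1).indicator hS
  have hce : ∫ ω in A, (P[f|𝓕 t]) ω ∂P = ∫ ω in A, f ω ∂P :=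
    setIntegral_condExp (𝓕.le t) hf_int hA
  have hrhs : ∫ ω in A, f ω ∂P = (P (A ∩ S)).toReal := by
    rw [hf_def, setIntegral_indicator hS, setIntegral_const, smul_eq_mul, mul_one]; rfl
  have hlhs : q * (P A).toReal ≤ ∫ ω in A, (P[f|𝓕 t]) ω ∂P := by
    calc q * (P A).toReal = ∫ _ω in A, q ∂P := by
          rw [setIntegral_const, smul_eq_mul, mul_comm]; rfl
      _ ≤ ∫ ω in A, (P[f|𝓕 t]) ω ∂P := by
          apply setIntegral_mono_ae_restrict
            (integrableOn_const (measure_ne_top P A))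
            integrable_condExp.integrableOn hdom
  calc q * (P A).toReal ≤ ∫ ω in A, (P[f|𝓕 t]) ω ∂P := hlhs
    _ = (P (A ∩ S)).toReal := by rw [hce, hrhs]

lemma ae_mem_of_condexp_one (𝓕 : Filtration ℕ mΩ) (t : ℕ) (S : Set Ω) (hS : MeasurableSet S)
    (hdom : ∀ᵐ ω ∂P, (1:ℝ) ≤ (P[S.indicator (fun _ => (1:ℝ))|𝓕 t]) ω) :
    ∀ᵐ ω ∂P, ω ∈ S := by
  set f : Ω → ℝ := S.indicator (fun _ => (1 : ℝ)) with hf_def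
  have hf_int : Integrable f P := (integrable_const 1).indicator hS
  have h1 : (1 : ℝ) ≤ ∫ ω, (P[f|𝓕 t]) ω ∂P := by
    calc (1:ℝ) = ∫ _ω, (1:ℝ) ∂P := by simp
      _ ≤ ∫ ω, (P[f|𝓕 t]) ω ∂P := integral_mono_ae (integrable_const 1) integrable_condExp hdom
  rw [integral_condExp (𝓕.le t)] at h1
  have h2 : ∫ ω, f ω ∂P = (P S).toReal := by
    rw [hf_def, integral_indicator hS, setIntegral_const, smul_eq_mul, mul_one]; rfl
  rw [h2] at h1
  have h3 : P S = 1 := by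
    have hle : (P S).toReal ≤ 1 := by
      have := prob_le_one (μ := P) (s := S)
      exact ENNReal.toReal_le_of_le_ofReal (by norm_num) (by simpa using this)
    rw [← ENNReal.toReal_eq_one_iff]
    exact le_antisymm hle h1
  have h4 : P Sᶜ = 0 := by
    rw [measure_compl hS (measure_ne_top P S), h3, measure_univ]
    simp
  rw [ae_iff]
  exact h4

lemma lintegral_nat_eq (T : Ω → ℕ) (hT : ∀ t : ℕ, MeasurableSet {ω | t < T ω}) :
    ∫⁻ ω, (T ω : ℝ≥0∞) ∂P = ∑' t : ℕ, P {ω | t < T ω} := by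
  have hpt : ∀ ω, ((T ω : ℝ≥0∞)) = ∑' t : ℕ, ({ω' | t < T ω'}).indicator (fun _ => (1:ℝ≥0∞)) ω := by
    intro ω
    have h1 : ∀ t : ℕ, ({ω' | t < T ω'}).indicator (fun _ => (1:ℝ≥0∞)) ω
        = if t < T ω then 1 else 0 := by
      intro t; simp [Set.indicator_apply, Set.mem_setOf_eq]
    rw [tsum_congr h1, tsum_eq_sum (s := Finset.range (T ω)) (by
      intro t ht
      simp only [Finset.mem_range] at ht
      rw [if_neg (by omega)])]
    rw [Finset.sum_congr rfl (fun t ht => by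
      simp only [Finset.mem_range] at ht
      rw [if_pos ht])]
    simp
  calc ∫⁻ ω, (T ω : ℝ≥0∞) ∂P
      = ∫⁻ ω, ∑' t : ℕ, ({ω' | t < T ω'}).indicator (fun _ => (1:ℝ≥0∞)) ω ∂P :=
        lintegral_congr hpt
    _ = ∑' t : ℕ, ∫⁻ ω, ({ω' | t < T ω'}).indicator (fun _ => (1:ℝ≥0∞)) ω ∂P :=
        lintegral_tsum (fun t => ((measurable_const).indicator (hT t)).aemeasurable)
    _ = ∑' t : ℕ, P {ω | t < T ω} := by
        refine tsum_congr (fun t => ?_)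
        exact lintegral_indicator_one (hT t)

/-! ### The one-step potential drop -/

set_option maxHeartbeats 1600000 in
lemma onestep (𝓕 : Filtration ℕ mΩ) (X Y : ℕ → Ω → ℤ)
    (hXad : ∀ t, Measurable[𝓕 t] (X t)) (hYad : ∀ t, Measurable[𝓕 (t + 1)] (Y (t + 1)))
    (hrec : ∀ t ω, X (t + 1) ω = X t ω + Y (t + 1) ω)
    (k : ℕ) (r s B : ℝ) (hs_def : s = (k:ℝ) * r)
    (hr0 : 0 < r) (hs029 : 0.29 ≤ s) (hB1 : 1 ≤ B) (hBr : B ≤ r⁻¹)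
    (t i : ℕ) (hi : 1 ≤ i)
    (hdom : ∀ (c : ℤ), ∀ᵐ ω ∂P,
      binomTail k (min (r * (X t ω : ℝ)) 1) c ≤
        (P[({ω' | c ≤ Y (t + 1) ω'}).indicator (fun _ => (1 : ℝ)) | 𝓕 t]) ω)
    (hY0 : ∀ᵐ ω ∂P, 0 ≤ Y (t+1) ω) (hX1 : ∀ᵐ ω ∂P, 1 ≤ X t ω) :
    (P {ω | Fb s B (i-1) ≤ (X t ω:ℝ) ∧ (X t ω:ℝ) < Fb s B i ∧ 1 ≤ X t ω}).toReal
      + ∫ ω, phi s B i (X (t+1) ω) ∂P ≤ ∫ ω, phi s B i (X t ω) ∂P := by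
  have hs0 : (0:ℝ) < s := lt_of_lt_of_le (by norm_num) hs029
  have hXm : ∀ u, Measurable (X u) := fun u => fun sσ hsσ => (𝓕.le u) _ (hXad u hsσ)
  have hYm : Measurable (Y (t+1)) := fun sσ hsσ => (𝓕.le (t+1)) _ (hYad t hsσ)
  set S : Finset ℤ := Finset.Icc (1:ℤ) ⌈B⌉ with hS_def
  set Ax : ℤ → Set Ω := fun x => {ω | X t ω = x} with hAx_def
  set Sc : ℤ → Set Ω := fun x => {ω' | cth s x ≤ Y (t+1) ω'} with hSc_def
  have hAxm : ∀ x, MeasurableSet (Ax x) := fun x => (hXm t) (MeasurableSet.of_discrete (s := {x}))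
  have hScm : ∀ x, MeasurableSet (Sc x) := by
    intro x
    have : Sc x = Y (t+1) ⁻¹' {z : ℤ | cth s x ≤ z} := rfl
    rw [this]
    exact hYm MeasurableSet.of_discrete
  set D : Ω → ℝ :=
    fun ω => ∑ x ∈ S, gv s B i x * (Ax x ∩ Sc x).indicator (fun _ => (1:ℝ)) ω with hD_def
  have hphi_int : ∀ u, Integrable (fun ω => phi s B i (X u ω)) P := by
    intro u
    apply Integrable.mono' (integrable_const (4:ℝ))
    · exact ((Measurable.of_discrete (f := phi s B i)).comp (hXm u)).aestronglyMeasurable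
    · filter_upwards with ω
      rw [Real.norm_eq_abs, abs_of_nonneg (phi_nonneg _ _ _ _)]
      exact phi_le_four _ _ _ _
  have hD_int : Integrable D P := by
    apply integrable_finset_sum
    intro x _
    exact (((integrable_const (1:ℝ)).indicator ((hAxm x).inter (hScm x))).const_mul _)
  have hpt : ∀ᵐ ω ∂P, phi s B i (X (t+1) ω) + D ω ≤ phi s B i (X t ω) := by
    filter_upwards [hY0, hX1] with ω hy hx
    have hmonoX : X t ω ≤ X (t+1) ω := by rw [hrec t ω]; omega
    have hDω : D ω = if X t ω ∈ S ∧ cth s (X t ω) ≤ Y (t+1) ω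
        then gv s B i (X t ω) else 0 := by
      simp only [hD_def]
      by_cases hmem : X t ω ∈ S
      · rw [Finset.sum_eq_single_of_mem (X t ω) hmem (fun b _ hb => by
          have hnot : ω ∉ Ax b ∩ Sc b := by
            rintro ⟨h1, -⟩
            exact hb ((show X t ω = b from h1).symm)
          rw [Set.indicator_of_notMem hnot, mul_zero])]
        by_cases hsucc : cth s (X t ω) ≤ Y (t+1) ω
        · rw [Set.indicator_of_mem
            (show ω ∈ Ax (X t ω) ∩ Sc (X t ω) from ⟨rfl, hsucc⟩), if_pos ⟨hmem, hsucc⟩, mul_one]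
        · have hnot : ω ∉ Ax (X t ω) ∩ Sc (X t ω) := by
            rintro ⟨-, h2⟩
            exact hsucc h2
          rw [Set.indicator_of_notMem hnot, if_neg (fun hcon => hsucc hcon.2), mul_zero]
      · rw [if_neg (fun hcon => hmem hcon.1)]
        apply Finset.sum_eq_zero
        intro b hb
        have hbne : X t ω ≠ b := fun hcon => hmem (hcon ▸ hb)
        have hnot : ω ∉ Ax b ∩ Sc b := by
          rintro ⟨h1, -⟩
          exact hbne (show X t ω = b from h1)
        rw [Set.indicator_of_notMem hnot, mul_zero]
    by_cases hcase : X t ω ∈ S ∧ cth s (X t ω) ≤ Y (t+1) ω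
    · rw [hDω, if_pos hcase]
      by_cases hact : Fb s B (i-1) ≤ ((X t ω):ℝ) ∧ ((X t ω):ℝ) < Fb s B i
      · have hdrop := phi_drop s B i hi hs0 (by linarith : (0:ℝ) ≤ B) (X t ω) (Y (t+1) ω)
          hx hy hcase.2 hact.1 hact.2
        rw [hrec t ω]
        linarith
      · have hgv0 : gv s B i (X t ω) = 0 := by rw [gv, if_neg hact]
        rw [hgv0]
        linarith [phi_mono s B hs0.le i hmonoX]
    · rw [hDω, if_neg hcase]
      linarith [phi_mono s B hs0.le i hmonoX]
  have hint : ∫ ω, phi s B i (X (t+1) ω) ∂P + ∫ ω, D ω ∂P ≤ ∫ ω, phi s B i (X t ω) ∂P := by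
    have hmono2 := integral_mono_ae ((hphi_int (t+1)).add hD_int) (hphi_int t) hpt
    simp only [Pi.add_apply] at hmono2
    rwa [integral_add (hphi_int (t+1)) hD_int] at hmono2
  have hDval : ∫ ω, D ω ∂P = ∑ x ∈ S, gv s B i x * (P (Ax x ∩ Sc x)).toReal := by
    simp only [hD_def]
    rw [integral_finset_sum _ (fun x _ =>
      (((integrable_const (1:ℝ)).indicator ((hAxm x).inter (hScm x))).const_mul _))]
    refine Finset.sum_congr rfl (fun x _ => ?_)
    rw [integral_const_mul, integral_indicator ((hAxm x).inter (hScm x)),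
      setIntegral_const, smul_eq_mul, mul_one]; rfl
  have hxq : ∀ x ∈ S, (Fb s B (i-1) ≤ (x:ℝ) ∧ (x:ℝ) < Fb s B i) →
      (P (Ax x)).toReal ≤ gv s B i x * (P (Ax x ∩ Sc x)).toReal := by
    intro x hxS hact
    have hx1 : (1:ℤ) ≤ x := (Finset.mem_Icc.mp hxS).1
    have hx1R : (1:ℝ) ≤ (x:ℝ) := by exact_mod_cast hx1
    have hxB : (x:ℝ) < B := lt_of_lt_of_le hact.2 (Fb_le_B s B i)
    have hrx1 : r * (x:ℝ) < 1 := by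
      have h2 : r * B ≤ 1 := by
        have := mul_le_mul_of_nonneg_left hBr hr0.le
        rwa [mul_inv_cancel₀ (ne_of_gt hr0)] at this
      nlinarith
    have hrx0 : (0:ℝ) < r * (x:ℝ) := mul_pos hr0 (by linarith)
    have hmin : min (r * (x:ℝ)) 1 = r * (x:ℝ) := min_eq_left hrx1.le
    have hlam : (k:ℝ) * (r * (x:ℝ)) = s * (x:ℝ) := by rw [hs_def]; ring
    have hq : (if s * (x:ℝ) ≤ 1 then (1:ℝ)/4 else 1/2) ≤ binomTail k (r * (x:ℝ)) (cth s x) := by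
      by_cases hsx : s * (x:ℝ) ≤ 1
      · rw [if_pos hsx, cth, if_pos hsx]
        apply L1 k _ hrx0.le hrx1.le
        rw [hlam]; nlinarith
      · rw [if_neg hsx, cth, if_neg hsx]
        push_neg at hsx
        have hL2 := L2 k (r * (x:ℝ)) hrx0 hrx1.le (by rw [hlam]; exact hsx)
        rwa [show ⌈(k:ℝ) * (r * (x:ℝ)) / 2⌉ = ⌈s * (x:ℝ) / 2⌉ by rw [hlam]] at hL2
    have hrest : ∀ᵐ ω ∂(P.restrict (Ax x)),
        binomTail k (min (r * (x:ℝ)) 1) (cth s x)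
          ≤ (P[(Sc x).indicator (fun _ => (1:ℝ))|𝓕 t]) ω := by
      rw [ae_restrict_iff' (hAxm x)]
      filter_upwards [hdom (cth s x)] with ω h hω
      have hXx : X t ω = x := hω
      rwa [hXx] at h
    have hsb := slice_bound P 𝓕 X Y hXad hYad t (cth s x) x _ hrest
    rw [hmin] at hsb
    have hPs0 : (0:ℝ) ≤ (P (Ax x)).toReal := ENNReal.toReal_nonneg
    have hgveq : gv s B i x = if s*(x:ℝ) ≤ 1 then 4 else 2 := by rw [gv, if_pos hact]
    by_cases hsx : s*(x:ℝ) ≤ 1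
    · rw [hgveq, if_pos hsx]
      rw [if_pos hsx] at hq
      nlinarith
    · rw [hgveq, if_neg hsx]
      rw [if_neg hsx] at hq
      nlinarith
  set E := {ω | Fb s B (i-1) ≤ ((X t ω):ℝ) ∧ ((X t ω):ℝ) < Fb s B i ∧ 1 ≤ X t ω} with hE_def
  set Sf := S.filter (fun x : ℤ => Fb s B (i-1) ≤ (x:ℝ) ∧ (x:ℝ) < Fb s B i) with hSf_def
  have hEsub : E ⊆ ⋃ x ∈ Sf, Ax x := by
    intro ω hω
    obtain ⟨h1, h2, h3⟩ := hω
    refine Set.mem_biUnion (show X t ω ∈ Sf from ?_) (show ω ∈ Ax (X t ω) from rfl)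
    rw [hSf_def, Finset.mem_filter, hS_def, Finset.mem_Icc]
    refine ⟨⟨h3, ?_⟩, h1, h2⟩
    have hxB : ((X t ω):ℝ) < B := lt_of_lt_of_le h2 (Fb_le_B s B i)
    have hceil : ((X t ω):ℝ) < ((⌈B⌉:ℤ):ℝ) := lt_of_lt_of_le hxB (Int.le_ceil B)
    exact le_of_lt (by exact_mod_cast hceil)
  have hEreal : (P E).toReal ≤ ∑ x ∈ Sf, (P (Ax x)).toReal := by
    have hmu : P E ≤ ∑ x ∈ Sf, P (Ax x) :=
      le_trans (measure_mono hEsub) (measure_biUnion_finset_le Sf _)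
    have hfin : ∑ x ∈ Sf, P (Ax x) ≠ ⊤ :=
      (ENNReal.sum_lt_top.mpr (fun x _ => measure_lt_top P _)).ne
    calc (P E).toReal ≤ (∑ x ∈ Sf, P (Ax x)).toReal := ENNReal.toReal_mono hfin hmu
      _ = ∑ x ∈ Sf, (P (Ax x)).toReal := ENNReal.toReal_sum (fun x _ => measure_ne_top P _)
  have hsum : (P E).toReal ≤ ∫ ω, D ω ∂P := by
    rw [hDval]
    calc (P E).toReal ≤ ∑ x ∈ Sf, (P (Ax x)).toReal := hEreal
      _ ≤ ∑ x ∈ Sf, gv s B i x * (P (Ax x ∩ Sc x)).toReal := by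
          apply Finset.sum_le_sum
          intro x hx
          rw [hSf_def, Finset.mem_filter] at hx
          exact hxq x hx.1 hx.2
      _ ≤ ∑ x ∈ S, gv s B i x * (P (Ax x ∩ Sc x)).toReal := by
          apply Finset.sum_le_sum_of_subset_of_nonneg (Finset.filter_subset _ _)
          intro x _ _
          exact mul_nonneg (gv_nonneg _ _ _ _) ENNReal.toReal_nonneg
  linarith

end Meas


lemma lowTail_neg (k : ℕ) (p : ℝ) (d : ℤ) (hd : d < 0) : lowTail k p d = 0 := by
  apply Finset.sum_eq_zero
  intro j _
  rw [if_neg (by push_cast; omega)]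

lemma binomTail_zero (k : ℕ) (p : ℝ) : binomTail k p 0 = 1 := by
  rw [binomTail_eq, lowTail_neg k p (0-1) (by norm_num)]
  ring

end Stmt4Aux

open Stmt4Aux

set_option maxHeartbeats 1600000 in
/-- Multiplicative growth lemma: `X₀ = 1`, `X_{t+1} = X_t + Y_{t+1}`, where conditionally
on the history `𝓕 t`, the increment `Y_{t+1}` stochastically dominates
`Bin(k, min{r·X_t, 1})`, and `k·r ≥ 0.29`.  Then for `B ∈ [1, 1/r]`, the hitting time
`T = inf{t : X_t ≥ B}` satisfies `E[T] ≤ 4·⌈log_{1+kr} B⌉`. -/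
theorem stmt_4 {Ω : Type*} {mΩ : MeasurableSpace Ω} (P : Measure Ω) [IsProbabilityMeasure P]
    (k : ℕ) (hk : 1 ≤ k) (r : ℝ) (hr : r ∈ Set.Ioo (0 : ℝ) 1) (hkr : 0.29 ≤ (k : ℝ) * r)
    (𝓕 : Filtration ℕ mΩ)
    (X Y : ℕ → Ω → ℤ)
    (hXad : ∀ t, Measurable[𝓕 t] (X t))
    (hYad : ∀ t, Measurable[𝓕 (t + 1)] (Y (t + 1)))
    (hX0 : ∀ ω, X 0 ω = 1)
    (hrec : ∀ t ω, X (t + 1) ω = X t ω + Y (t + 1) ω)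
    (hdom : ∀ t (c : ℤ), ∀ᵐ ω ∂P,
      binomTail k (min (r * (X t ω : ℝ)) 1) c ≤
        (P[({ω' | c ≤ Y (t + 1) ω'}).indicator (fun _ => (1 : ℝ)) | 𝓕 t]) ω)
    (B : ℝ) (hB : B ∈ Set.Icc (1 : ℝ) r⁻¹)
    (T : Ω → ℕ) (hT : ∀ ω, T ω = sInf {t : ℕ | B ≤ (X t ω : ℝ)}) :
    ∫⁻ ω, (T ω : ℝ≥0∞) ∂P ≤
      ENNReal.ofReal (4 * (⌈Real.log B / Real.log (1 + (k : ℝ) * r)⌉ : ℝ)) := by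
  obtain ⟨hr0, hr1⟩ := hr
  obtain ⟨hB1, hBr⟩ := hB
  set s : ℝ := (k : ℝ) * r with hs_def
  have hs029 : (0.29 : ℝ) ≤ s := hkr
  have hs0 : (0 : ℝ) < s := by nlinarith
  set m : ℕ := (⌈Real.log B / Real.log (1 + s)⌉).toNat with hm_def
  have hlogu : 0 < Real.log (1 + s) := Real.log_pos (by linarith)
  have hratio0 : 0 ≤ Real.log B / Real.log (1 + s) :=
    div_nonneg (Real.log_nonneg hB1) hlogu.le
  have hceil0 : 0 ≤ ⌈Real.log B / Real.log (1 + s)⌉ := Int.ceil_nonneg hratio0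
  have hmR : ((m : ℕ) : ℝ) = ((⌈Real.log B / Real.log (1 + s)⌉ : ℤ) : ℝ) := by
    rw [hm_def]
    exact_mod_cast congrArg (fun z : ℤ => (z : ℝ)) (Int.toNat_of_nonneg hceil0)
  have hpowm : B ≤ (1 + s) ^ m := by
    have h1 : Real.log B / Real.log (1 + s) ≤ (m : ℝ) := by
      rw [hmR]; exact Int.le_ceil _
    have h2 : Real.log B ≤ (m : ℝ) * Real.log (1 + s) := by
      calc Real.log B = (Real.log B / Real.log (1 + s)) * Real.log (1 + s) := by
            field_simp
        _ ≤ (m : ℝ) * Real.log (1 + s) := mul_le_mul_of_nonneg_right h1 hlogu.le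
    calc B = Real.exp (Real.log B) := (Real.exp_log (by linarith)).symm
      _ ≤ Real.exp ((m : ℝ) * Real.log (1 + s)) := Real.exp_le_exp.mpr h2
      _ = (1 + s) ^ m := (pow_eq_exp (1 + s) (by linarith) m).symm
  have hXm : ∀ u, Measurable (X u) := fun u => fun sσ hsσ => (𝓕.le u) _ (hXad u hsσ)
  -- a.s. nonnegativity of increments
  have hY0 : ∀ t, ∀ᵐ ω ∂P, (0 : ℤ) ≤ Y (t + 1) ω := by
    intro t
    have hSm : MeasurableSet {ω' | (0 : ℤ) ≤ Y (t + 1) ω'} := by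
      have h : {ω' | (0 : ℤ) ≤ Y (t + 1) ω'} = Y (t + 1) ⁻¹' {z : ℤ | 0 ≤ z} := rfl
      rw [h]
      exact (𝓕.le (t + 1)) _ ((hYad t) MeasurableSet.of_discrete)
    have h1 : ∀ᵐ ω ∂P, (1 : ℝ) ≤
        (P[({ω' | (0 : ℤ) ≤ Y (t + 1) ω'}).indicator (fun _ => (1 : ℝ)) | 𝓕 t]) ω := by
      filter_upwards [hdom t 0] with ω h
      calc (1 : ℝ) = binomTail k (min (r * (X t ω : ℝ)) 1) 0 := (binomTail_zero _ _).symm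
        _ ≤ _ := h
    exact ae_mem_of_condexp_one P 𝓕 t _ hSm h1
  have hX1 : ∀ t, ∀ᵐ ω ∂P, (1 : ℤ) ≤ X t ω := by
    intro t
    have hYall : ∀ᵐ ω ∂P, ∀ u, (0 : ℤ) ≤ Y (u + 1) ω := (ae_all_iff).mpr hY0
    filter_upwards [hYall] with ω hy
    induction t with
    | zero => rw [hX0 ω]
    | succ n ih => rw [hrec n ω]; have := hy n; omega
  -- events
  set E : ℕ → ℕ → Set Ω := fun i t =>
    {ω | Fb s B (i - 1) ≤ ((X t ω) : ℝ) ∧ ((X t ω) : ℝ) < Fb s B i ∧ 1 ≤ X t ω} with hE_def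
  -- integrability of the potential
  have hphi_int : ∀ i u, Integrable (fun ω => phi s B i (X u ω)) P := by
    intro i u
    apply Integrable.mono' (integrable_const (4 : ℝ))
    · exact ((Measurable.of_discrete (f := phi s B i)).comp (hXm u)).aestronglyMeasurable
    · filter_upwards with ω
      rw [Real.norm_eq_abs, abs_of_nonneg (phi_nonneg _ _ _ _)]
      exact phi_le_four _ _ _ _
  -- telescoping bound per phase
  have htel : ∀ i, 1 ≤ i → ∀ τ : ℕ, ∑ t ∈ Finset.range τ, (P (E i t)).toReal ≤ 4 := by
    intro i hi τ
    have hstep : ∀ t, (P (E i t)).toReal + ∫ ω, phi s B i (X (t + 1) ω) ∂P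
        ≤ ∫ ω, phi s B i (X t ω) ∂P := by
      intro t
      exact onestep P 𝓕 X Y hXad hYad hrec k r s B hs_def hr0 hs029 hB1 hBr t i hi
        (hdom t) (hY0 t) (hX1 t)
    have hτ : ∑ t ∈ Finset.range τ, (P (E i t)).toReal
        ≤ ∫ ω, phi s B i (X 0 ω) ∂P - ∫ ω, phi s B i (X τ ω) ∂P := by
      induction τ with
      | zero => simp
      | succ n ih =>
          rw [Finset.sum_range_succ]
          have := hstep n
          linarith
    have hφ0 : ∫ ω, phi s B i (X 0 ω) ∂P ≤ 4 := by
      calc ∫ ω, phi s B i (X 0 ω) ∂P ≤ ∫ _ω, (4 : ℝ) ∂P :=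
            integral_mono_ae (hphi_int i 0) (integrable_const 4)
              (Filter.Eventually.of_forall (fun ω => phi_le_four _ _ _ _))
        _ = 4 := by simp
    have hφτ : 0 ≤ ∫ ω, phi s B i (X τ ω) ∂P :=
      integral_nonneg (fun ω => phi_nonneg _ _ _ _)
    linarith
  -- characterization of T > t
  have hTgt : ∀ t ω, t < T ω ↔
      ((∃ u, B ≤ ((X u ω) : ℝ)) ∧ ∀ u ≤ t, ((X u ω) : ℝ) < B) := by
    intro t ω
    rw [hT ω]
    constructor
    · intro h
      have hne : {u : ℕ | B ≤ ((X u ω) : ℝ)}.Nonempty := by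
        by_contra hcon
        rw [Set.not_nonempty_iff_eq_empty] at hcon
        rw [hcon, Nat.sInf_empty] at h
        omega
      refine ⟨hne, fun u hu => ?_⟩
      by_contra hcon
      push_neg at hcon
      have := Nat.sInf_le (show u ∈ {u : ℕ | B ≤ ((X u ω) : ℝ)} from hcon)
      omega
    · rintro ⟨⟨u, hu⟩, hall⟩
      have hmem := Nat.sInf_mem (show {u : ℕ | B ≤ ((X u ω) : ℝ)}.Nonempty from ⟨u, hu⟩)
      by_contra hcon
      push_neg at hcon
      have := hall _ hcon
      simp only [Set.mem_setOf_eq] at hmem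
      linarith
  have hTmeas : ∀ t, MeasurableSet {ω | t < T ω} := by
    intro t
    have heq : {ω | t < T ω} = (⋃ u, {ω | B ≤ ((X u ω) : ℝ)})
        ∩ (⋂ u, ⋂ _ : u ≤ t, {ω | ((X u ω) : ℝ) < B}) := by
      ext ω
      simp only [Set.mem_setOf_eq, Set.mem_inter_iff, Set.mem_iUnion, Set.mem_iInter]
      exact hTgt t ω
    rw [heq]
    refine MeasurableSet.inter (MeasurableSet.iUnion fun u => ?_)
      (MeasurableSet.iInter fun u => MeasurableSet.iInter fun _ => ?_)
    · have h : {ω | B ≤ ((X u ω) : ℝ)} = X u ⁻¹' {z : ℤ | B ≤ (z : ℝ)} := rfl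
      rw [h]; exact (hXm u) MeasurableSet.of_discrete
    · have h : {ω | ((X u ω) : ℝ) < B} = X u ⁻¹' {z : ℤ | (z : ℝ) < B} := rfl
      rw [h]; exact (hXm u) MeasurableSet.of_discrete
  rw [lintegral_nat_eq P T hTmeas]
  -- per-time bound
  have hPle : ∀ t, P {ω | t < T ω} ≤ ∑ i ∈ Finset.Icc 1 m, P (E i t) := by
    intro t
    have hUmeas : P {ω | ¬ (1 : ℤ) ≤ X t ω} = 0 := by
      have := hX1 t
      rw [ae_iff] at this
      simpa using this
    have hsub : {ω | t < T ω} ⊆ (⋃ i ∈ Finset.Icc 1 m, E i t) ∪ {ω | ¬ (1 : ℤ) ≤ X t ω} := by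
      intro ω hmem
      by_cases hx : (1 : ℤ) ≤ X t ω
      · left
        have hXtB : ((X t ω) : ℝ) < B := ((hTgt t ω).mp hmem).2 t le_rfl
        have hx1R : (1 : ℝ) ≤ ((X t ω) : ℝ) := by exact_mod_cast hx
        have hFm : ((X t ω) : ℝ) < Fb s B m :=
          lt_min hXtB (lt_of_lt_of_le hXtB hpowm)
        obtain ⟨i, hi1, him, hlo, hhi⟩ := exists_phase s B hB1 m _ hx1R hFm
        exact Set.mem_biUnion (Finset.mem_Icc.mpr ⟨hi1, him⟩) ⟨hlo, hhi, hx⟩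
      · right; exact hx
    calc P {ω | t < T ω}
        ≤ P ((⋃ i ∈ Finset.Icc 1 m, E i t) ∪ {ω | ¬ (1 : ℤ) ≤ X t ω}) := measure_mono hsub
      _ ≤ P (⋃ i ∈ Finset.Icc 1 m, E i t) + P {ω | ¬ (1 : ℤ) ≤ X t ω} := measure_union_le _ _
      _ = P (⋃ i ∈ Finset.Icc 1 m, E i t) := by rw [hUmeas, add_zero]
      _ ≤ ∑ i ∈ Finset.Icc 1 m, P (E i t) := measure_biUnion_finset_le _ _
  -- sum it all up
  have hsumbound : ∀ τ : ℕ, ∑ t ∈ Finset.range τ, P {ω | t < T ω}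
      ≤ ENNReal.ofReal (4 * (m : ℝ)) := by
    intro τ
    calc ∑ t ∈ Finset.range τ, P {ω | t < T ω}
        ≤ ∑ t ∈ Finset.range τ, ∑ i ∈ Finset.Icc 1 m, P (E i t) :=
          Finset.sum_le_sum fun t _ => hPle t
      _ = ∑ i ∈ Finset.Icc 1 m, ∑ t ∈ Finset.range τ, P (E i t) := Finset.sum_comm
      _ ≤ ∑ _i ∈ Finset.Icc 1 m, ENNReal.ofReal 4 := by
          apply Finset.sum_le_sum
          intro i hi
          have h4 := htel i (Finset.mem_Icc.mp hi).1 τ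
          have heq : ∑ t ∈ Finset.range τ, P (E i t)
              = ENNReal.ofReal (∑ t ∈ Finset.range τ, (P (E i t)).toReal) := by
            rw [ENNReal.ofReal_sum_of_nonneg (fun _ _ => ENNReal.toReal_nonneg)]
            exact Finset.sum_congr rfl fun t _ =>
              (ENNReal.ofReal_toReal (measure_ne_top P _)).symm
          rw [heq]
          exact ENNReal.ofReal_le_ofReal h4
      _ = (Finset.Icc 1 m).card • ENNReal.ofReal 4 := Finset.sum_const _
      _ = ENNReal.ofReal (4 * (m : ℝ)) := by
          rw [Nat.card_Icc, Nat.add_sub_cancel, nsmul_eq_mul,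
            ← ENNReal.ofReal_natCast m, ← ENNReal.ofReal_mul (by positivity)]
          congr 1
          ring
  have hfinal : ∑' t : ℕ, P {ω | t < T ω} ≤ ENNReal.ofReal (4 * (m : ℝ)) :=
    ENNReal.tsum_le_of_sum_range_le hsumbound
  calc ∑' t : ℕ, P {ω | t < T ω} ≤ ENNReal.ofReal (4 * (m : ℝ)) := hfinal
    _ = ENNReal.ofReal (4 * ((⌈Real.log B / Real.log (1 + s)⌉ : ℤ) : ℝ)) := by rw [hmR]
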